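/- If Σ_{k=0}^∞ 1/a_k = ∞, then the Jacobi operator J is essentially self-adjoint. -/

import Mathlib

open MeasureTheory

noncomputable section

instance : Fact ((1 : ENNReal) ≤ 2) := ⟨one_le_two⟩

/-- The Hilbert space `ℓ²(ℤ≥0)`. -/
abbrev JacobiH : Type := lp (fun _ : ℕ => ℂ) 2

/-- The submodule of finitely supported elements of `ℓ²(ℤ≥0)`. -/
def finSupp : Submodule ℂ JacobiH where
  carrier := {f | (Function.support (f : ℕ → ℂ)).Finite}
  zero_mem' := by
    have : Function.support ((0 : JacobiH) : ℕ → ℂ) = ∅ := by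
      ext x
      simp only [Function.mem_support, Set.mem_empty_iff_false, iff_false, not_not]
      rfl
    show (Function.support ((0 : JacobiH) : ℕ → ℂ)).Finite
    rw [this]
    exact Set.finite_empty
  add_mem' := by
    intro f g hf hg
    refine (hf.union hg).subset fun x hx => ?_
    by_contra hc
    simp only [Set.mem_union, Function.mem_support, not_or, not_not] at hc
    exact hx (by simp only [Function.mem_support, not_not, lp.coeFn_add, Pi.add_apply,
      hc.1, hc.2, add_zero])
  smul_mem' := by
    intro c f hf
    refine hf.subset fun x hx => ?_
    by_contra hc
    simp only [Function.mem_support, not_not] at hc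
    exact hx (by simp only [Function.mem_support, not_not, lp.coeFn_smul, Pi.smul_apply,
      hc, smul_zero])

/-- The formal Jacobi (tridiagonal) expression with coefficients `a`, `b`, using the
conventions `a_{-1} = 0`, `v_{-1} = 0`. -/
def jacobiApply (a b : ℕ → ℝ) (v : ℕ → ℂ) : ℕ → ℂ
  | 0 => (a 0 : ℂ) * v 1 + (b 0 : ℂ) * v 0
  | (k + 1) => (a (k + 1) : ℂ) * v (k + 2) + (b (k + 1) : ℂ) * v (k + 1) + (a k : ℂ) * v k

/-- Green's identity / summation by parts for the Jacobi expression: the partial sums of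
`conj (Ju)ₖ vₖ - conj uₖ (Jv)ₖ` telescope to the Wronskian. -/
lemma jacobi_green (a b : ℕ → ℝ) (u v : ℕ → ℂ) (n : ℕ) :
    ∑ k ∈ Finset.range (n + 1),
      ((starRingEnd ℂ) (jacobiApply a b u k) * v k
        - (starRingEnd ℂ) (u k) * jacobiApply a b v k)
      = (a n : ℂ) * ((starRingEnd ℂ) (u (n + 1)) * v n
          - (starRingEnd ℂ) (u n) * v (n + 1)) := by
  induction n with
  | zero =>
      rw [Finset.sum_range_one]
      show (starRingEnd ℂ) ((a 0 : ℂ) * u 1 + (b 0 : ℂ) * u 0) * v 0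
        - (starRingEnd ℂ) (u 0) * ((a 0 : ℂ) * v 1 + (b 0 : ℂ) * v 0) = _
      simp only [map_add, map_mul, Complex.conj_ofReal]
      ring
  | succ n ih =>
      rw [Finset.sum_range_succ, ih]
      have : jacobiApply a b u (n+1) = (a (n + 1) : ℂ) * u (n + 2) + (b (n + 1) : ℂ) * u (n + 1) + (a n : ℂ) * u n := rfl
      rw [this]
      have : jacobiApply a b v (n+1) = (a (n + 1) : ℂ) * v (n + 2) + (b (n + 1) : ℂ) * v (n + 1) + (a n : ℂ) * v n := rfl
      rw [this]
      simp only [map_add, map_mul, Complex.conj_ofReal]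
      ring

lemma sq_summable (x : JacobiH) : Summable (fun n : ℕ => ‖(x : ℕ → ℂ) n‖ ^ 2) := by
  have h := (lp.memℓp x).summable (p := 2) (by norm_num)
  convert h using 2 with n
  rw [show ((2 : ENNReal).toReal) = ((2:ℕ):ℝ) by norm_num, Real.rpow_natCast]

/-- The Carleman argument: if `Σ 1/aₖ = ∞` and `x, y, Jx, Jy` are all in `ℓ²`, then
`⟪Jx, y⟫ = ⟪x, Jy⟫` (the boundary Wronskian term vanishes). -/
lemma key_inner (a b : ℕ → ℝ) (hapos : ∀ k, 0 < a k)
    (hdiv : ¬ Summable (fun k : ℕ => (a k)⁻¹))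
    (x y fx fy : JacobiH)
    (hfx : ∀ k, (fx : ℕ → ℂ) k = jacobiApply a b (x : ℕ → ℂ) k)
    (hfy : ∀ k, (fy : ℕ → ℂ) k = jacobiApply a b (y : ℕ → ℂ) k) :
    (inner ℂ fx y : ℂ) = inner ℂ x fy := by
  set u : ℕ → ℂ := (x : ℕ → ℂ)
  set v : ℕ → ℂ := (y : ℕ → ℂ)
  set L : ℂ := (inner ℂ fx y : ℂ) - inner ℂ x fy with hL
  have h1 : HasSum (fun k => (starRingEnd ℂ) ((fx : ℕ → ℂ) k) * v k) (inner ℂ fx y : ℂ) := by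
    have := lp.hasSum_inner (𝕜 := ℂ) fx y
    simpa [RCLike.inner_apply, mul_comm] using this
  have h2 : HasSum (fun k => (starRingEnd ℂ) (u k) * (fy : ℕ → ℂ) k) (inner ℂ x fy : ℂ) := by
    have := lp.hasSum_inner (𝕜 := ℂ) x fy
    simpa [RCLike.inner_apply, mul_comm] using this
  have hD : HasSum (fun k => (starRingEnd ℂ) (jacobiApply a b u k) * v k
      - (starRingEnd ℂ) (u k) * jacobiApply a b v k) L := by
    have hfun : (fun k => (starRingEnd ℂ) (jacobiApply a b u k) * v k
        - (starRingEnd ℂ) (u k) * jacobiApply a b v k)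
        = fun k => (starRingEnd ℂ) ((fx : ℕ → ℂ) k) * v k
          - (starRingEnd ℂ) (u k) * (fy : ℕ → ℂ) k := by
      funext k; rw [hfx, hfy]
    rw [hfun]
    exact h1.sub h2
  have hW : Filter.Tendsto (fun n => (a n : ℂ) * ((starRingEnd ℂ) (u (n + 1)) * v n
      - (starRingEnd ℂ) (u n) * v (n + 1))) Filter.atTop (nhds L) := by
    have h3 := hD.tendsto_sum_nat
    have h4 := h3.comp (Filter.tendsto_add_atTop_nat 1)
    refine h4.congr fun n => ?_
    exact jacobi_green a b u v n
  rw [← sub_eq_zero]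
  by_contra hL0
  have hLpos : 0 < ‖L‖ := norm_pos_iff.mpr hL0
  have hev : ∀ᶠ n in Filter.atTop, ‖L‖ / 2 < ‖(a n : ℂ) * ((starRingEnd ℂ) (u (n + 1)) * v n
      - (starRingEnd ℂ) (u n) * v (n + 1))‖ :=
    hW.norm.eventually (eventually_gt_nhds (by linarith))
  set g : ℕ → ℝ := fun n => ‖u (n + 1)‖ * ‖v n‖ + ‖u n‖ * ‖v (n + 1)‖ with hg
  have hgsum : Summable g := by
    have hs1 : Summable (fun n : ℕ => ‖u (n + 1)‖ * ‖v n‖) := by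
      refine Summable.of_nonneg_of_le (fun n => by positivity) (fun n => ?_)
        ((((summable_nat_add_iff 1).mpr (sq_summable x)).add (sq_summable y)).div_const 2)
      simp only [Pi.add_apply]
      nlinarith [sq_nonneg (‖u (n + 1)‖ - ‖v n‖), norm_nonneg (u (n+1)), norm_nonneg (v n)]
    have hs2 : Summable (fun n : ℕ => ‖u n‖ * ‖v (n + 1)‖) := by
      refine Summable.of_nonneg_of_le (fun n => by positivity) (fun n => ?_)
        (((sq_summable x).add ((summable_nat_add_iff 1).mpr (sq_summable y))).div_const 2)
      simp only [Pi.add_apply]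
      nlinarith [sq_nonneg (‖u n‖ - ‖v (n + 1)‖), norm_nonneg (u n), norm_nonneg (v (n+1))]
    exact hs1.add hs2
  have hbound : ∀ᶠ n in Filter.atTop, ‖(a n)⁻¹‖ ≤ (2 / ‖L‖) * ‖g n‖ := by
    filter_upwards [hev] with n hn
    have han := hapos n
    have hWle : ‖(a n : ℂ) * ((starRingEnd ℂ) (u (n + 1)) * v n
        - (starRingEnd ℂ) (u n) * v (n + 1))‖ ≤ a n * g n := by
      rw [norm_mul, Complex.norm_real, Real.norm_of_nonneg han.le]
      refine mul_le_mul_of_nonneg_left ?_ han.le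
      refine (norm_sub_le _ _).trans ?_
      simp only [norm_mul, RCLike.norm_conj, hg]
      exact le_refl _
    have h5 : ‖L‖ / 2 < a n * g n := lt_of_lt_of_le hn hWle
    have hgn : 0 ≤ g n := by positivity
    rw [Real.norm_of_nonneg (inv_nonneg.mpr han.le), Real.norm_of_nonneg hgn]
    rw [inv_le_iff_one_le_mul₀ han]
    rw [div_mul_eq_mul_div, div_mul_eq_mul_div, le_div_iff₀ hLpos]
    nlinarith
  have : Summable (fun k : ℕ => (a k)⁻¹) :=
    summable_of_isBigO_nat hgsum (Asymptotics.IsBigO.of_bound (2 / ‖L‖) hbound)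
  exact hdiv this

lemma single_mem_finSupp (i : ℕ) (c : ℂ) : lp.single 2 i c ∈ finSupp := by
  refine (Set.finite_singleton i).subset fun j hj => ?_
  simp only [Function.mem_support] at hj
  simp only [Set.mem_singleton_iff]
  by_contra h
  exact hj (lp.single_apply_ne (E := fun _ : ℕ => ℂ) 2 i c h)

lemma finSupp_dense : Dense (finSupp : Set JacobiH) := by
  intro f
  have hs := lp.hasSum_single (E := fun _ : ℕ => ℂ) (p := 2) (by norm_num) f
  exact mem_closure_of_tendsto hs (Filter.Eventually.of_forall fun s =>
    Submodule.sum_mem _ fun i _ => single_mem_finSupp i (f i))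

lemma single_coe (i j : ℕ) :
    ((lp.single 2 i (1:ℂ) : JacobiH) : ℕ → ℂ) j = if j = i then 1 else 0 := by
  by_cases h : j = i
  · subst h; simp [lp.single_apply_self]
  · simp [lp.single_apply_ne 2 i _ h, h]

set_option linter.unreachableTactic false in
set_option linter.unusedTactic false in
lemma jacobi_single0 (a b : ℕ → ℝ) (f : ℕ → ℂ) (hf : ∀ j, f j = if j = 0 then 1 else 0)
    (j : ℕ) : jacobiApply a b f j
      = (b 0 : ℂ) * (if j = 0 then 1 else 0) + (a 0 : ℂ) * (if j = 1 then 1 else 0) := by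
  match j with
  | 0 => show (a 0 : ℂ) * f 1 + (b 0 : ℂ) * f 0 = _; simp [hf]
  | (m + 1) =>
      show (a (m+1) : ℂ) * f (m+2) + (b (m+1) : ℂ) * f (m+1) + (a m : ℂ) * f m = _
      simp only [hf]
      clear hf
      split_ifs <;> simp_all <;> omega

set_option linter.unreachableTactic false in
set_option linter.unusedTactic false in
lemma jacobi_singleS (a b : ℕ → ℝ) (k : ℕ) (f : ℕ → ℂ)
    (hf : ∀ j, f j = if j = k + 1 then 1 else 0) (j : ℕ) :
    jacobiApply a b f j
      = (a k : ℂ) * (if j = k then 1 else 0) + (b (k+1) : ℂ) * (if j = k+1 then 1 else 0)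
        + (a (k+1) : ℂ) * (if j = k+2 then 1 else 0) := by
  match j with
  | 0 => show (a 0 : ℂ) * f 1 + (b 0 : ℂ) * f 0 = _
         simp only [hf]
         clear hf
         split_ifs <;> simp_all <;> omega
  | (m + 1) =>
      show (a (m+1) : ℂ) * f (m+2) + (b (m+1) : ℂ) * f (m+1) + (a m : ℂ) * f m = _
      simp only [hf]
      clear hf
      split_ifs <;> simp_all <;> omega

/-- If `Σ_k 1/a_k = ∞`, then the Jacobi operator `J` (with domain the finitely supported
sequences) is essentially self-adjoint, i.e. `J** = J*`. -/
theorem essentially_selfAdjoint_of_divergent_reciprocals (a b : ℕ → ℝ) (hapos : ∀ k, 0 < a k)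
    (hdiv : ¬ Summable (fun k : ℕ => (a k)⁻¹))
    (J : JacobiH →ₗ.[ℂ] JacobiH) (hdom : J.domain = finSupp)
    (hact : ∀ (v : J.domain) (k : ℕ),
      (J v : ℕ → ℂ) k = jacobiApply a b ((v : JacobiH) : ℕ → ℂ) k) :
    J.adjoint.adjoint = J.adjoint := by
  classical
  have hd : Dense (J.domain : Set JacobiH) := by rw [hdom]; exact finSupp_dense
  have hJsymm : J.IsFormalAdjoint J := fun p q =>
    key_inner a b hapos hdiv p q (J p) (J q) (hact p) (hact q)
  have hle1 : J ≤ J.adjoint := hJsymm.le_adjoint hd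
  have hd' : Dense (J.adjoint.domain : Set JacobiH) :=
    hd.mono (SetLike.coe_subset_coe.mpr hle1.1)
  have hsd : ∀ i : ℕ, lp.single 2 i (1:ℂ) ∈ J.domain := fun i => by
    rw [hdom]; exact single_mem_finSupp i 1
  -- J applied to singles
  have hJe0 : (J ⟨lp.single 2 0 1, hsd 0⟩ : JacobiH)
      = (b 0 : ℂ) • lp.single 2 0 1 + (a 0 : ℂ) • lp.single 2 1 1 := by
    apply lp.ext
    funext j
    rw [hact]
    rw [jacobi_single0 a b _ (fun j => single_coe 0 j) j]
    simp only [lp.coeFn_add, lp.coeFn_smul, Pi.add_apply, Pi.smul_apply, smul_eq_mul,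
      single_coe]
  have hJeS : ∀ k : ℕ, (J ⟨lp.single 2 (k+1) 1, hsd (k+1)⟩ : JacobiH)
      = (a k : ℂ) • lp.single 2 k 1 + (b (k+1) : ℂ) • lp.single 2 (k+1) 1
        + (a (k+1) : ℂ) • lp.single 2 (k+2) 1 := by
    intro k
    apply lp.ext
    funext j
    rw [hact]
    rw [jacobi_singleS a b k _ (fun j => single_coe (k+1) j) j]
    simp only [lp.coeFn_add, lp.coeFn_smul, Pi.add_apply, Pi.smul_apply, smul_eq_mul,
      single_coe]
  -- the pointwise formula for the adjoint
  have hpt : ∀ (v : J.adjoint.domain) (k : ℕ),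
      (J.adjoint v : ℕ → ℂ) k = jacobiApply a b ((v : JacobiH) : ℕ → ℂ) k := by
    intro v k
    have hform := (LinearPMap.adjoint_isFormalAdjoint hd) v ⟨lp.single 2 k 1, hsd k⟩
    match k with
    | 0 =>
        rw [show ((⟨lp.single 2 0 1, hsd 0⟩ : J.domain) : JacobiH) = lp.single 2 0 1 from rfl,
          lp.inner_single_right, hJe0, inner_add_right, inner_smul_right, inner_smul_right,
          lp.inner_single_right, lp.inner_single_right] at hform
        simp only [RCLike.inner_apply, map_one, mul_one, one_mul] at hform
        have h2 := congrArg (starRingEnd ℂ) hform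
        simp only [map_add, map_mul, Complex.conj_conj, Complex.conj_ofReal] at h2
        rw [show jacobiApply a b ((v : JacobiH) : ℕ → ℂ) 0
          = (a 0 : ℂ) * ((v : JacobiH) : ℕ → ℂ) 1 + (b 0 : ℂ) * ((v : JacobiH) : ℕ → ℂ) 0
          from rfl, h2]
        ring
    | (k + 1) =>
        rw [show ((⟨lp.single 2 (k+1) 1, hsd (k+1)⟩ : J.domain) : JacobiH)
            = lp.single 2 (k+1) 1 from rfl,
          lp.inner_single_right, hJeS k, inner_add_right, inner_add_right, inner_smul_right,
          inner_smul_right, inner_smul_right, lp.inner_single_right, lp.inner_single_right,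
          lp.inner_single_right] at hform
        simp only [RCLike.inner_apply, map_one, mul_one, one_mul] at hform
        have h2 := congrArg (starRingEnd ℂ) hform
        simp only [map_add, map_mul, Complex.conj_conj, Complex.conj_ofReal] at h2
        rw [show jacobiApply a b ((v : JacobiH) : ℕ → ℂ) (k+1)
          = (a (k+1) : ℂ) * ((v : JacobiH) : ℕ → ℂ) (k+2)
            + (b (k+1) : ℂ) * ((v : JacobiH) : ℕ → ℂ) (k+1)
            + (a k : ℂ) * ((v : JacobiH) : ℕ → ℂ) k from rfl, h2]
        ring
  -- the adjoint is symmetric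
  have hAsymm : J.adjoint.IsFormalAdjoint J.adjoint := fun p q =>
    key_inner a b hapos hdiv p q (J.adjoint p) (J.adjoint q) (hpt p) (hpt q)
  have hle2 : J.adjoint ≤ J.adjoint.adjoint := hAsymm.le_adjoint hd'
  have hle3 : J.adjoint.adjoint ≤ J.adjoint := by
    constructor
    · intro y hy
      apply LinearPMap.mem_adjoint_domain_of_exists
      refine ⟨J.adjoint.adjoint ⟨y, hy⟩, fun x => ?_⟩
      have h1 := (LinearPMap.adjoint_isFormalAdjoint hd') ⟨y, hy⟩
        (Submodule.inclusion hle1.1 x)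
      have h3 : J.adjoint (Submodule.inclusion hle1.1 x) = J x := (hle1.2 rfl).symm
      rw [h3] at h1
      exact h1
    · intro x y hxy
      symm
      refine LinearPMap.adjoint_apply_eq hd y (x₀ := J.adjoint.adjoint x) fun z => ?_
      have h1 := (LinearPMap.adjoint_isFormalAdjoint hd') x (Submodule.inclusion hle1.1 z)
      have h3 : J.adjoint (Submodule.inclusion hle1.1 z) = J z := (hle1.2 rfl).symm
      rw [h3, hxy] at h1
      exact h1
  exact le_antisymm hle3 hle2
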